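/- Let D = (c_1,…,c_n) be a p-monotone Ferrers diagram of order n = p^m, and let B = (β_1,…,β_n) be an F-basis of L such that span_F(β_1,…,β_i) = F_i for every i ∈ {1,…,n} (an F-compatible basis). Let L[σ;D] = {Σ_{i=1}^n λ_i·σ̄^{i−1} : λ_i ∈ F_{c_i}} ⊆ End_F(L). Then the F-linear map sending f ∈ L[σ;D] to its matrix with respect to B (whose j-th column records the coordinates of f(β_j) in the basis B) is an F-linear isomorphism from L[σ;D] onto F^D. -/

import Mathlib

/-- A Ferrers diagram of order `n`, given by its column heights
`c 0 ≤ c 1 ≤ … ≤ c (n-1) ≤ n` (so `c j` is the number of dots in the (j+1)-st column). -/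
def IsFerrersDiagram (n : ℕ) (c : Fin n → ℕ) : Prop :=
  Monotone c ∧ ∀ i, c i ≤ n

/-- Extension of the column-height function to `ℕ`, by zero. -/
def colExt (n : ℕ) (c : Fin n → ℕ) : ℕ → ℕ :=
  fun k => if h : k < n then c ⟨k, h⟩ else 0

/-- `ν_j(D,d) = Σ_{i=1}^{n-j} max{0, c_i - d + 1 + j}` (truncated subtraction gives the max). -/
def nuJ (n d j : ℕ) (c : Fin n → ℕ) : ℕ :=
  ∑ i ∈ Finset.range (n - j), (colExt n c i + 1 + j - d)

/-- `ν_min(D,d) = min{ν_j(D,d) : 0 ≤ j ≤ d-1}`. -/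
noncomputable def nuMin (n d : ℕ) (c : Fin n → ℕ) : ℕ :=
  sInf {k | ∃ j < d, k = nuJ n d j c}

/-- A Ferrers diagram is monotone if `c (i+1) > c i` whenever `0 < c i < n`. -/
def DiagMonotone (n : ℕ) (c : Fin n → ℕ) : Prop :=
  ∀ i : Fin n, ∀ hi : (i : ℕ) + 1 < n, 0 < c i → c i < n → c i < c ⟨(i : ℕ) + 1, hi⟩

/-- A Ferrers diagram is convex if `c (i+1) - c i ≤ 1` for all `i`. -/
def DiagConvex (n : ℕ) (c : Fin n → ℕ) : Prop :=
  ∀ i : Fin n, ∀ hi : (i : ℕ) + 1 < n, c ⟨(i : ℕ) + 1, hi⟩ ≤ c i + 1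

/-- A Ferrers diagram is strictly monotone if `c (i+1) > c i` whenever `c i > 0`. -/
def DiagStrictlyMonotone (n : ℕ) (c : Fin n → ℕ) : Prop :=
  ∀ i : Fin n, ∀ hi : (i : ℕ) + 1 < n, 0 < c i → c i < c ⟨(i : ℕ) + 1, hi⟩

/-- A Ferrers diagram is initially convex if `c 1 ≤ 1` and `c (i+1) - c i ≤ 1` for all `i`. -/
def DiagInitiallyConvex (n : ℕ) (c : Fin n → ℕ) : Prop :=
  (∀ h : 0 < n, c ⟨0, h⟩ ≤ 1) ∧ DiagConvex n c

/-- `h` is an admissible `p`-height for the Ferrers diagram `c`: `p^h ∣ n`, `p^h ∣ c i` for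
all `i`, and `c (n-r) = c (n-s)` (1-indexed) whenever `r, s` lie in the same block
`{Q p^h, …, (Q+1) p^h - 1}`. -/
def HeightOK (p n h : ℕ) (c : Fin n → ℕ) : Prop :=
  p ^ h ∣ n ∧ (∀ i, p ^ h ∣ c i) ∧
    ∀ r s : Fin n, (r : ℕ) / p ^ h = (s : ℕ) / p ^ h →
      c ⟨n - 1 - (r : ℕ), by have := r.isLt; omega⟩ =
        c ⟨n - 1 - (s : ℕ), by have := s.isLt; omega⟩

/-- The `p`-height of a Ferrers diagram: the largest admissible `h`. -/
noncomputable def pHeight (p n : ℕ) (c : Fin n → ℕ) : ℕ :=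
  sSup {h | HeightOK p n h c}

/-- The `p`-contraction of a Ferrers diagram: `c'_i = c_{p^h i} / p^h` (1-indexed),
a diagram of order `n / p^h`, where `h` is the `p`-height. -/
noncomputable def pContraction (p n : ℕ) (c : Fin n → ℕ) :
    Fin (n / p ^ pHeight p n c) → ℕ :=
  fun i => colExt n c (p ^ pHeight p n c * ((i : ℕ) + 1) - 1) / p ^ pHeight p n c

/-- A Ferrers diagram is `p`-monotone if its `p`-contraction is monotone. -/
def IsPMonotone (p n : ℕ) (c : Fin n → ℕ) : Prop :=
  DiagMonotone (n / p ^ pHeight p n c) (pContraction p n c)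

/-- A Ferrers diagram is `p`-convex if its `p`-contraction is convex. -/
def IsPConvex (p n : ℕ) (c : Fin n → ℕ) : Prop :=
  DiagConvex (n / p ^ pHeight p n c) (pContraction p n c)

/-- A Ferrers diagram is strictly `p`-monotone if its `p`-contraction is strictly monotone. -/
def IsStrictlyPMonotone (p n : ℕ) (c : Fin n → ℕ) : Prop :=
  DiagStrictlyMonotone (n / p ^ pHeight p n c) (pContraction p n c)

/-- A Ferrers diagram is initially `p`-convex if its `p`-contraction is initially convex. -/
def IsInitiallyPConvex (p n : ℕ) (c : Fin n → ℕ) : Prop :=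
  DiagInitiallyConvex (n / p ^ pHeight p n c) (pContraction p n c)

/-- The adjoint Ferrers diagram: column `j+1` of `D^⊤` has `#{i : c i ≥ n - j}` dots. -/
def adjointDiag (n : ℕ) (c : Fin n → ℕ) : Fin n → ℕ :=
  fun j => (Finset.univ.filter (fun i : Fin n => n - (j : ℕ) ≤ c i)).card

/-- `|D ∩ Δ_{i+1}^n|`: the number of dots of `D` on the (i+1)-st diagonal (0-indexed `i`). -/
def diagDots (n : ℕ) (c : Fin n → ℕ) (i : ℕ) : ℕ :=
  ((Finset.range n).filter (fun r => r + i < n ∧ r < colExt n c (r + i))).card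

/-- The pair `(D, d)` is MDS-constructible if
`ν_min(D,d) = Σ_{i=1}^n max{0, |D ∩ Δ_i^n| - d + 1}`. -/
def IsMDSConstructibleP (n d : ℕ) (c : Fin n → ℕ) : Prop :=
  nuMin n d c = ∑ i ∈ Finset.range n, (diagDots n c i + 1 - d)

/-- `σ̄ = σ - id`, as an `F`-linear endomorphism of `L`. -/
def sbar {F L : Type*} [Field F] [Field L] [Algebra F L] (σ : L ≃ₐ[F] L) :
    L →ₗ[F] L :=
  σ.toLinearMap - LinearMap.id

namespace Statement6Aux

variable {F L : Type*} [Field F] [Field L] [Algebra F L]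

lemma sbar_apply (τ : L ≃ₐ[F] L) (x : L) : sbar τ x = τ x - x := rfl

lemma sbar_eq (τ : L ≃ₐ[F] L) : sbar τ = τ.toLinearMap - 1 := rfl

lemma sbar_mul (τ : L ≃ₐ[F] L) (x y : L) :
    sbar τ (x * y) = τ x * sbar τ y + sbar τ x * y := by
  simp only [sbar_apply, map_mul]; ring

lemma commute_sbar (τ : L ≃ₐ[F] L) : Commute (sbar τ) τ.toLinearMap := by
  rw [sbar_eq]
  exact (Commute.refl τ.toLinearMap).sub_left (Commute.one_left τ.toLinearMap)

lemma ker_pow_mono (D : L →ₗ[F] L) {a b : ℕ} (h : a ≤ b) {x : L} (hx : (D ^ a) x = 0) :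
    (D ^ b) x = 0 := by
  obtain ⟨t, rfl⟩ := Nat.exists_eq_add_of_le h
  rw [add_comm, pow_add, Module.End.mul_apply, hx, map_zero]

lemma tau_ker (τ : L ≃ₐ[F] L) (k : ℕ) {x : L} (hx : ((sbar τ) ^ k) x = 0) :
    ((sbar τ) ^ k) (τ x) = 0 := by
  have hc : ((sbar τ) ^ k) * τ.toLinearMap = τ.toLinearMap * ((sbar τ) ^ k) :=
    ((commute_sbar τ).pow_left k)
  have h2 := LinearMap.congr_fun hc x
  simp only [Module.End.mul_apply, AlgEquiv.toLinearMap_apply] at h2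
  rw [h2, hx, map_zero]

lemma ker_mul_ker (τ : L ≃ₐ[F] L) :
    ∀ (s a b : ℕ) (x y : L), a + b ≤ s →
      ((sbar τ) ^ (a + 1)) x = 0 → ((sbar τ) ^ (b + 1)) y = 0 →
      ((sbar τ) ^ (a + b + 1)) (x * y) = 0 := by
  intro s
  induction s with
  | zero =>
    intro a b x y hab hx hy
    obtain ⟨rfl, rfl⟩ : a = 0 ∧ b = 0 := by omega
    simp only [pow_one, Nat.add_zero, Nat.zero_add] at hx hy ⊢
    rw [sbar_mul, hx, hy, mul_zero, zero_mul, add_zero]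
  | succ s ih =>
    intro a b x y hab hx hy
    rcases le_or_gt (a + b) s with h | h
    · exact ih a b x y h hx hy
    have step : ((sbar τ) ^ (a + b)) (sbar τ (x * y)) = 0 := by
      rw [sbar_mul, map_add]
      have h1 : ((sbar τ) ^ (a + b)) (τ x * sbar τ y) = 0 := by
        cases b with
        | zero =>
          have hy0 : sbar τ y = 0 := by simpa using hy
          simp [hy0]
        | succ b' =>
          have hy' : ((sbar τ) ^ (b' + 1)) (sbar τ y) = 0 := by
            have h3 : ((sbar τ) ^ (b' + 1) * (sbar τ)) y = 0 := by
              rw [← pow_succ]; exact hy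
            simpa [Module.End.mul_apply] using h3
          have h4 := ih a b' (τ x) (sbar τ y) (by omega) (tau_ker τ _ hx) hy'
          have e : a + (b' + 1) = a + b' + 1 := by omega
          rw [e]; exact h4
      have h2 : ((sbar τ) ^ (a + b)) (sbar τ x * y) = 0 := by
        cases a with
        | zero =>
          have hx0 : sbar τ x = 0 := by simpa using hx
          simp [hx0]
        | succ a' =>
          have hx' : ((sbar τ) ^ (a' + 1)) (sbar τ x) = 0 := by
            have h3 : ((sbar τ) ^ (a' + 1) * (sbar τ)) x = 0 := by
              rw [← pow_succ]; exact hx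
            simpa [Module.End.mul_apply] using h3
          have h4 := ih a' b (sbar τ x) y (by omega) hx' hy
          have e : a' + 1 + b = a' + b + 1 := by omega
          rw [e]; exact h4
      rw [h1, h2, add_zero]
    have h5 : ((sbar τ) ^ (a + b) * (sbar τ)) (x * y) = 0 := by
      simpa [Module.End.mul_apply] using step
    rw [← pow_succ] at h5; exact h5

lemma div_top {P q : ℕ} (hP : 0 < P) : (P * (q + 1) - 1) / P = q := by
  have h1 : P * (q + 1) = P * q + P := by ring
  have h2 : P * (q + 1) - 1 = P * q + (P - 1) := by omega
  rw [h2, Nat.mul_add_div hP, Nat.div_eq_of_lt (by omega), add_zero]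

lemma div_reflect {P N a b : ℕ} (hP : 0 < P) (ha : a < P * N) (hb : b < P * N)
    (h : a / P = b / P) : (P * N - 1 - a) / P = (P * N - 1 - b) / P := by
  have key : ∀ x : ℕ, x < P * N → (P * N - 1 - x) / P = N - 1 - x / P := by
    intro x hx
    have hq : x / P < N := by
      rw [Nat.div_lt_iff_lt_mul hP]; rwa [mul_comm]
    obtain ⟨t, ht⟩ : ∃ t, N = x / P + 1 + t := ⟨N - x / P - 1, by omega⟩
    have hmod := Nat.div_add_mod x P
    have hmodlt : x % P < P := Nat.mod_lt _ hP
    have e1 : P * N = P * (x / P) + P + P * t := by rw [ht]; ring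
    have e2 : P * N - 1 - x = P * t + (P - 1 - x % P) := by omega
    rw [e2, Nat.mul_add_div hP, Nat.div_eq_of_lt (by omega), add_zero]
    omega
  rw [key a ha, key b hb, h]

lemma sub_le_block {P qi qj ri rj dd : ℕ} (hri : ri < P) (hrj : rj < P)
    (hqd : qj = qi + dd) :
    (P * qj + rj) + 1 - (P * qi + ri) ≤ P * (dd + 1) := by
  have e1 : P * qj = P * qi + P * dd := by rw [hqd]; ring
  have e2 : P * (dd + 1) = P * dd + P := by ring
  omega

lemma card_filter_lt {n k : ℕ} (hk : k ≤ n) :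
    (Finset.univ.filter (fun i : Fin n => (i : ℕ) < k)).card = k := by
  apply Finset.card_eq_of_bijective (fun t ht => (⟨t, lt_of_lt_of_le ht hk⟩ : Fin n))
  · intro a ha
    simp only [Finset.mem_filter] at ha
    exact ⟨a, ha.2, rfl⟩
  · intro t ht
    simp only [Finset.mem_filter, Finset.mem_univ, true_and]
    exact ht
  · intro i j hi hj hij
    simpa using congrArg Fin.val hij

end Statement6Aux

/-- for a `p`-monotone Ferrers diagram `D` of order `n = p^m` and an
`F`-compatible basis `B` of `L` (i.e. `span_F(β_1,…,β_k) = F_k` for all `k`), the map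
sending `f ∈ L[σ;D]` to its matrix with respect to `B` is an `F`-linear isomorphism
from `L[σ;D]` onto `F^D`; equivalently (the map being linear and injective), the image
of `L[σ;D]` under `f ↦ toMatrix B B f` is exactly `F^D`. -/
theorem statement6 {p m : ℕ} (hp : p.Prime) (hm : 1 ≤ m)
    {F L : Type*} [Field F] [Field L] [Algebra F L] [IsGalois F L] [FiniteDimensional F L]
    [CharP F p] (hn : Module.finrank F L = p ^ m)
    (σ : L ≃ₐ[F] L) (hσ : ∀ τ : L ≃ₐ[F] L, τ ∈ Subgroup.zpowers σ)
    (c : Fin (p ^ m) → ℕ) (hferr : IsFerrersDiagram (p ^ m) c)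
    (hmon : IsPMonotone p (p ^ m) c)
    (B : Module.Basis (Fin (p ^ m)) F L)
    (hB : ∀ k : ℕ, k ≤ p ^ m →
      Submodule.span F (⇑B '' {j : Fin (p ^ m) | (j : ℕ) < k}) =
        LinearMap.ker (sbar σ ^ k)) :
    (fun f : L →ₗ[F] L => LinearMap.toMatrix B B f) ''
        {f : L →ₗ[F] L | ∃ lam : Fin (p ^ m) → L,
          (∀ i, lam i ∈ LinearMap.ker (sbar σ ^ c i)) ∧
          ∀ x : L, f x = ∑ i : Fin (p ^ m), lam i * (sbar σ ^ (i : ℕ)) x} =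
      {A : Matrix (Fin (p ^ m)) (Fin (p ^ m)) F |
        ∀ i j : Fin (p ^ m), c j ≤ (i : ℕ) → A i j = 0} := by
  classical
  haveI : Fact p.Prime := ⟨hp⟩
  have hOK : HeightOK p (p ^ m) (pHeight p (p ^ m) c) c := by
    have hmem : sSup {h | HeightOK p (p ^ m) h c} ∈ {h | HeightOK p (p ^ m) h c} := by
      apply Nat.sSup_mem
      · refine ⟨0, ⟨by simp, fun i => by simp, ?_⟩⟩
        intro r s hrs
        have hrs' : (r : ℕ) = s := by simpa using hrs
        exact congrArg c (Fin.ext (show p ^ m - 1 - (r : ℕ) = p ^ m - 1 - (s : ℕ) by omega))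
      · refine ⟨m, ?_⟩
        rintro x ⟨hdvd, -, -⟩
        exact (Nat.pow_dvd_pow_iff_le_right hp.one_lt).mp hdvd
    exact hmem
  obtain ⟨hPn, hPc, hblk⟩ := hOK
  set h := pHeight p (p ^ m) c with hhdef
  set P := p ^ h with hPdef
  have hPpos : 0 < P := pow_pos hp.pos h
  have hnpos : 0 < p ^ m := pow_pos hp.pos m
  set n' := p ^ m / P with hn'def
  have hmul : p ^ m = P * n' := (Nat.mul_div_cancel' hPn).symm
  have hn'pos : 0 < n' := by
    rcases Nat.eq_zero_or_pos n' with h0 | h0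
    · rw [h0, mul_zero] at hmul; omega
    · exact h0
  obtain ⟨cq, hmon', hcval⟩ : ∃ cq : Fin n' → ℕ, DiagMonotone n' cq ∧
      ∀ q : Fin n', cq q = colExt (p ^ m) c (P * ((q : ℕ) + 1) - 1) / P :=
    ⟨pContraction p (p ^ m) c, hmon, fun _ => rfl⟩
  clear_value n' P h
  -- block constancy of c
  have hblock : ∀ i i' : Fin (p ^ m), (i : ℕ) / P = (i' : ℕ) / P → c i = c i' := by
    intro i i' hdiv
    have hi := i.isLt; have hi' := i'.isLt
    have hre : (p ^ m - 1 - (i : ℕ)) / P = (p ^ m - 1 - (i' : ℕ)) / P := by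
      rw [show p ^ m - 1 - (i : ℕ) = P * n' - 1 - (i : ℕ) by omega,
        show p ^ m - 1 - (i' : ℕ) = P * n' - 1 - (i' : ℕ) by omega]
      exact Statement6Aux.div_reflect hPpos (by omega) (by omega) hdiv
    have h1 := hblk ⟨p ^ m - 1 - (i : ℕ), by omega⟩ ⟨p ^ m - 1 - (i' : ℕ), by omega⟩ hre
    have e1 : (⟨p ^ m - 1 - ((⟨p ^ m - 1 - (i : ℕ), by omega⟩ : Fin (p ^ m)) : ℕ), by
        omega⟩ : Fin (p ^ m)) = i := Fin.ext (by show p ^ m - 1 - (p ^ m - 1 - (i : ℕ)) = i; omega)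
    have e2 : (⟨p ^ m - 1 - ((⟨p ^ m - 1 - (i' : ℕ), by omega⟩ : Fin (p ^ m)) : ℕ), by
        omega⟩ : Fin (p ^ m)) = i' := Fin.ext (by show p ^ m - 1 - (p ^ m - 1 - (i' : ℕ)) = i'; omega)
    rwa [e1, e2] at h1
  have hdivlt : ∀ i : Fin (p ^ m), (i : ℕ) / P < n' := by
    intro i
    rw [Nat.div_lt_iff_lt_mul hPpos, mul_comm]
    have := i.isLt; omega
  -- value of c in terms of the contraction
  have hc : ∀ i : Fin (p ^ m), c i = P * cq ⟨(i : ℕ) / P, hdivlt i⟩ := by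
    intro i
    have hq := hdivlt i
    have hpos2 : 0 < P * ((i : ℕ) / P + 1) := Nat.mul_pos hPpos (Nat.succ_pos _)
    have h1 : P * ((i : ℕ) / P + 1) ≤ P * n' := Nat.mul_le_mul_left P (by omega)
    have hidx : P * ((i : ℕ) / P + 1) - 1 < p ^ m := by omega
    have htop : c i = c ⟨P * ((i : ℕ) / P + 1) - 1, hidx⟩ :=
      hblock _ _ (show (i : ℕ) / P = (P * ((i : ℕ) / P + 1) - 1) / P from
        (Statement6Aux.div_top hPpos).symm)
    have h2 : cq ⟨(i : ℕ) / P, hdivlt i⟩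
        = colExt (p ^ m) c (P * ((i : ℕ) / P + 1) - 1) / P := hcval _
    have h3 : colExt (p ^ m) c (P * ((i : ℕ) / P + 1) - 1)
        = c ⟨P * ((i : ℕ) / P + 1) - 1, hidx⟩ := by
      simp only [colExt]; rw [dif_pos hidx]
    rw [htop, h2, h3]
    exact (Nat.mul_div_cancel' (hPc _)).symm
  -- representatives
  have hrep : ∀ q : Fin n', ∃ i : Fin (p ^ m),
      (i : ℕ) = P * ((q : ℕ) + 1) - 1 ∧ c i = P * cq q := by
    intro q
    have hq := q.isLt
    have hpos2 : 0 < P * ((q : ℕ) + 1) := Nat.mul_pos hPpos (Nat.succ_pos _)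
    have h1 : P * ((q : ℕ) + 1) ≤ P * n' := Nat.mul_le_mul_left P (by omega)
    have hidx : P * ((q : ℕ) + 1) - 1 < p ^ m := by omega
    refine ⟨⟨P * ((q : ℕ) + 1) - 1, hidx⟩, rfl, ?_⟩
    have e : (⟨((⟨P * ((q : ℕ) + 1) - 1, hidx⟩ : Fin (p ^ m)) : ℕ) / P, hdivlt _⟩ : Fin n') = q :=
      Fin.ext (Statement6Aux.div_top hPpos)
    rw [hc ⟨P * ((q : ℕ) + 1) - 1, hidx⟩, e]
  have hcqle : ∀ q : Fin n', cq q ≤ n' := by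
    intro q
    obtain ⟨i, -, hi⟩ := hrep q
    have h2 := hferr.2 i
    rw [hi] at h2
    exact Nat.le_of_mul_le_mul_left (by omega) hPpos
  have hcqmono : ∀ q q' : Fin n', (q : ℕ) ≤ (q' : ℕ) → cq q ≤ cq q' := by
    intro q q' hqq
    obtain ⟨i, hiv, hi⟩ := hrep q
    obtain ⟨i', hiv', hi'⟩ := hrep q'
    have h1 : P * ((q : ℕ) + 1) ≤ P * ((q' : ℕ) + 1) := Nat.mul_le_mul_left P (by omega)
    have hii : i ≤ i' := by rw [Fin.le_def]; omega
    have h2 := hferr.1 hii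
    rw [hi, hi'] at h2
    exact Nat.le_of_mul_le_mul_left h2 hPpos
  -- the monotone chain bound
  have chain : ∀ t : ℕ, ∀ qa : Fin n', ∀ hlt : (qa : ℕ) + t < n',
      0 < cq qa → min n' (cq qa + t) ≤ cq ⟨(qa : ℕ) + t, hlt⟩ := by
    intro t
    induction t with
    | zero =>
      intro qa hlt hpos
      have e : (⟨(qa : ℕ) + 0, hlt⟩ : Fin n') = qa :=
        Fin.ext (show (qa : ℕ) + 0 = (qa : ℕ) by omega)
      rw [e]
      exact le_trans (min_le_right _ _) (by omega)
    | succ t ih =>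
      intro qa hlt hpos
      have hlt' : (qa : ℕ) + t < n' := by omega
      have H1 := ih qa hlt' hpos
      have hii : ((⟨(qa : ℕ) + t, hlt'⟩ : Fin n') : ℕ) + 1 < n' := by
        show (qa : ℕ) + t + 1 < n'
        omega
      have hgidx : (⟨(qa : ℕ) + (t + 1), hlt⟩ : Fin n')
          = ⟨((⟨(qa : ℕ) + t, hlt'⟩ : Fin n') : ℕ) + 1, hii⟩ := Fin.ext rfl
      rw [hgidx]
      by_cases hcase : cq ⟨(qa : ℕ) + t, hlt'⟩ < n'
      · have hpos1 : 0 < cq ⟨(qa : ℕ) + t, hlt'⟩ :=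
          lt_of_lt_of_le (lt_min hn'pos (by omega)) H1
        have hmono1 := hmon' ⟨(qa : ℕ) + t, hlt'⟩ hii hpos1 hcase
        have h2 : cq qa + t ≤ cq ⟨(qa : ℕ) + t, hlt'⟩ := by
          rcases min_cases n' (cq qa + t) with ⟨he, hle⟩ | ⟨he, hle⟩ <;> rw [he] at H1 <;> omega
        exact le_trans (min_le_right _ _) (by omega)
      · have hle2 : cq ⟨(qa : ℕ) + t, hlt'⟩
            ≤ cq ⟨((⟨(qa : ℕ) + t, hlt'⟩ : Fin n') : ℕ) + 1, hii⟩ :=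
          hcqmono _ _ (by show (qa : ℕ) + t ≤ (qa : ℕ) + t + 1; omega)
        exact le_trans (min_le_left _ _) (by omega)
  -- characteristic p facts in the endomorphism algebra
  haveI : Nontrivial (Module.End F L) :=
    ⟨1, 0, fun hcon => one_ne_zero (α := L) (by simpa using LinearMap.congr_fun hcon 1)⟩
  haveI : CharP (Module.End F L) p := charP_of_injective_algebraMap' F (A := Module.End F L) p
  have hDP : (sbar σ) ^ P = sbar (σ ^ P) := by
    rw [hPdef, Statement6Aux.sbar_eq, Statement6Aux.sbar_eq, AlgEquiv.pow_toLinearMap]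
    rw [sub_pow_char_pow_of_commute (R := Module.End F L) p h
      (Commute.one_right σ.toLinearMap), one_pow]
  have hDPk : ∀ k, (sbar σ) ^ (P * k) = (sbar (σ ^ P)) ^ k := by
    intro k; rw [pow_mul, hDP]
  have kermul : ∀ a b : ℕ, 1 ≤ a → 1 ≤ b → ∀ x y : L,
      ((sbar σ) ^ (P * a)) x = 0 → ((sbar σ) ^ (P * b)) y = 0 →
      ((sbar σ) ^ (P * (a + b - 1))) (x * y) = 0 := by
    intro a b ha hb x y hx hy
    rw [hDPk] at hx hy ⊢
    have hmm := Statement6Aux.ker_mul_ker (σ ^ P) (a + b) (a - 1) (b - 1) x y (by omega)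
      (by rw [show a - 1 + 1 = a by omega]; exact hx)
      (by rw [show b - 1 + 1 = b by omega]; exact hy)
    rw [show a - 1 + (b - 1) + 1 = a + b - 1 by omega] at hmm
    exact hmm
  -- the kernel of the n-th power is everything
  have hkertop : ∀ x : L, ((sbar σ) ^ (p ^ m)) x = 0 := by
    intro x
    have hsp : Submodule.span F (⇑B '' {j : Fin (p ^ m) | (j : ℕ) < p ^ m}) = ⊤ := by
      have he : {j : Fin (p ^ m) | (j : ℕ) < p ^ m} = Set.univ :=
        Set.eq_univ_of_forall (fun j => j.isLt)
      rw [he, Set.image_univ, Module.Basis.span_eq]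
    have htot := hB (p ^ m) le_rfl
    rw [hsp] at htot
    have hx : x ∈ LinearMap.ker ((sbar σ) ^ (p ^ m)) := by rw [← htot]; trivial
    exact hx
  -- basis vectors lie in the kernel filtration
  have hBmem : ∀ j : Fin (p ^ m), ((sbar σ) ^ ((j : ℕ) + 1)) (B j) = 0 := by
    intro j
    have hj : (j : ℕ) + 1 ≤ p ^ m := j.isLt
    have hmem : B j ∈ Submodule.span F (⇑B '' {t : Fin (p ^ m) | (t : ℕ) < (j : ℕ) + 1}) :=
      Submodule.subset_span ⟨j, by simp, rfl⟩
    rw [hB ((j : ℕ) + 1) hj] at hmem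
    exact hmem
  -- the key term-wise membership
  have term_mem : ∀ (i j : Fin (p ^ m)) (lam y : L),
      ((sbar σ) ^ (c i)) lam = 0 → ((sbar σ) ^ ((j : ℕ) + 1 - (i : ℕ))) y = 0 →
      ((sbar σ) ^ (c j)) (lam * y) = 0 := by
    intro i j lam y hlam hy
    rcases eq_or_lt_of_le (hferr.2 j) with hcj | hcj
    · rw [hcj]; exact hkertop _
    rcases le_or_gt (i : ℕ) (j : ℕ) with hij | hij
    swap
    · have hy0 : ((sbar σ) ^ 0) y = 0 := by
        rw [show (0 : ℕ) = (j : ℕ) + 1 - (i : ℕ) by omega]; exact hy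
      simp only [pow_zero, Module.End.one_apply] at hy0
      rw [hy0, mul_zero, map_zero]
    have hqilt : (i : ℕ) / P < n' := hdivlt i
    have hqjlt : (j : ℕ) / P < n' := hdivlt j
    have hqij : (i : ℕ) / P ≤ (j : ℕ) / P := Nat.div_le_div_right hij
    obtain ⟨dd, hdd⟩ : ∃ d, (j : ℕ) / P = (i : ℕ) / P + d := ⟨_, (Nat.add_sub_cancel' hqij).symm⟩
    have hci := hc i
    by_cases h0 : cq ⟨(i : ℕ) / P, hdivlt i⟩ = 0
    · have hc0 : c i = 0 := by rw [hci, h0, mul_zero]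
      rw [hc0, pow_zero, Module.End.one_apply] at hlam
      rw [hlam, zero_mul, map_zero]
    · have h0' : 1 ≤ cq ⟨(i : ℕ) / P, hdivlt i⟩ := by omega
      have hy2 : ((sbar σ) ^ (P * (dd + 1))) y = 0 := by
        refine Statement6Aux.ker_pow_mono _ ?_ hy
        have hieq : (i : ℕ) = P * ((i : ℕ) / P) + (i : ℕ) % P := (Nat.div_add_mod _ _).symm
        have hjeq : (j : ℕ) = P * ((j : ℕ) / P) + (j : ℕ) % P := (Nat.div_add_mod _ _).symm
        rw [hjeq, hieq]
        exact Statement6Aux.sub_le_block (Nat.mod_lt _ hPpos) (Nat.mod_lt _ hPpos) hdd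
      have hmulmem := kermul (cq ⟨(i : ℕ) / P, hdivlt i⟩) (dd + 1) h0' (by omega) lam y
        (by rw [← hci]; exact hlam) hy2
      rw [show cq ⟨(i : ℕ) / P, hdivlt i⟩ + (dd + 1) - 1
        = cq ⟨(i : ℕ) / P, hdivlt i⟩ + dd by omega] at hmulmem
      have hltq : ((⟨(i : ℕ) / P, hdivlt i⟩ : Fin n') : ℕ) + dd < n' := by
        show (i : ℕ) / P + dd < n'
        omega
      have hch := chain dd ⟨(i : ℕ) / P, hdivlt i⟩ hltq h0'
      have hche : (⟨((⟨(i : ℕ) / P, hdivlt i⟩ : Fin n') : ℕ) + dd, hltq⟩ : Fin n')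
          = ⟨(j : ℕ) / P, hqjlt⟩ :=
        Fin.ext (by show (i : ℕ) / P + dd = (j : ℕ) / P; omega)
      rw [hche] at hch
      have hcj' := hc j
      have hcqj : cq ⟨(j : ℕ) / P, hqjlt⟩ < n' := by
        have hml : P * cq ⟨(j : ℕ) / P, hqjlt⟩ < P * n' := by
          rw [← hcj']
          omega
        exact lt_of_mul_lt_mul_left hml (Nat.zero_le P)
      have hfin : cq ⟨(i : ℕ) / P, hdivlt i⟩ + dd ≤ cq ⟨(j : ℕ) / P, hqjlt⟩ := by
        rcases min_cases n' (cq ⟨(i : ℕ) / P, hdivlt i⟩ + dd) with ⟨he, hle⟩ | ⟨he, hle⟩ <;>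
          rw [he] at hch <;> omega
      refine Statement6Aux.ker_pow_mono _ ?_ hmulmem
      rw [hcj']
      exact Nat.mul_le_mul_left P hfin
  -- forward direction: matrices of elements of L[sigma;D] are supported on D
  have fwd : ∀ (f : L →ₗ[F] L) (lam : Fin (p ^ m) → L),
      (∀ t, ((sbar σ) ^ (c t)) (lam t) = 0) →
      (∀ x : L, f x = ∑ t : Fin (p ^ m), lam t * ((sbar σ) ^ (t : ℕ)) x) →
      ∀ i j : Fin (p ^ m), c j ≤ (i : ℕ) → LinearMap.toMatrix B B f i j = 0 := by
    intro f lam hmem hfx i j hij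
    rw [LinearMap.toMatrix_apply]
    have hker : f (B j) ∈ LinearMap.ker ((sbar σ) ^ (c j)) := by
      rw [hfx (B j)]
      apply Submodule.sum_mem
      intro t _
      rw [LinearMap.mem_ker]
      apply term_mem t j _ _ (hmem t)
      have h1 : ((sbar σ) ^ ((j : ℕ) + 1 - (t : ℕ)) * (sbar σ) ^ (t : ℕ)) (B j) = 0 := by
        rw [← pow_add]
        exact Statement6Aux.ker_pow_mono _ (by omega) (hBmem j)
      simpa [Module.End.mul_apply] using h1
    rw [← hB (c j) (hferr.2 j)] at hker
    have hcoord : Submodule.span F (⇑B '' {t : Fin (p ^ m) | (t : ℕ) < c j})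
        ≤ LinearMap.ker (B.coord i) := by
      rw [Submodule.span_le]
      rintro _ ⟨t, ht, rfl⟩
      simp only [Set.mem_setOf_eq] at ht
      simp only [SetLike.mem_coe, LinearMap.mem_ker, Module.Basis.coord_apply, Module.Basis.repr_self]
      exact Finsupp.single_eq_of_ne' (fun hte => by
        have : (t : ℕ) = (i : ℕ) := congrArg Fin.val hte
        omega)
    have h2 := hcoord hker
    rw [LinearMap.mem_ker, Module.Basis.coord_apply] at h2
    exact h2
  -- the parametrizing linear map
  set Ki : Fin (p ^ m) → Submodule F L := fun i => LinearMap.ker ((sbar σ) ^ (c i)) with hKi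
  set Ψ : (∀ i : Fin (p ^ m), Ki i) →ₗ[F] (L →ₗ[F] L) :=
    ∑ i : Fin (p ^ m), (LinearMap.lcomp F L ((sbar σ) ^ (i : ℕ))).comp
      ((LinearMap.mul F L).comp ((Ki i).subtype.comp (LinearMap.proj i))) with hΨdef
  have hΨap : ∀ (lam : ∀ i : Fin (p ^ m), Ki i) (x : L),
      Ψ lam x = ∑ i : Fin (p ^ m), (lam i : L) * ((sbar σ) ^ (i : ℕ)) x := by
    intro lam x
    rw [hΨdef, LinearMap.sum_apply, LinearMap.sum_apply]
    refine Finset.sum_congr rfl (fun t _ => ?_)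
    simp only [LinearMap.comp_apply, LinearMap.lcomp_apply, LinearMap.mul_apply',
      Submodule.coe_subtype, LinearMap.proj_apply]
  have hΨinj : Function.Injective Ψ := by
    rw [injective_iff_map_eq_zero]
    intro lam hlam
    by_contra hne
    have hex : ∃ i, lam i ≠ 0 := by
      by_contra hno
      push_neg at hno
      exact hne (funext hno)
    set s := Finset.univ.filter (fun i : Fin (p ^ m) => lam i ≠ 0) with hs
    have hsne : s.Nonempty := ⟨hex.choose, by simp [hs, hex.choose_spec]⟩
    set i0 := s.min' hsne with hi0def
    have hi0 : lam i0 ≠ 0 := (Finset.mem_filter.mp (s.min'_mem hsne)).2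
    have hmin : ∀ i : Fin (p ^ m), i < i0 → lam i = 0 := by
      intro i hi
      by_contra hcon
      exact absurd (s.min'_le i (by simp [hs, hcon])) (not_le.mpr hi)
    have happ : Ψ lam (B i0) = 0 := by rw [hlam]; rfl
    rw [hΨap] at happ
    have hsum : ∑ i : Fin (p ^ m), (lam i : L) * ((sbar σ) ^ (i : ℕ)) (B i0)
        = (lam i0 : L) * ((sbar σ) ^ ((i0 : ℕ))) (B i0) := by
      apply Finset.sum_eq_single
      · intro b _ hb
        rcases lt_or_gt_of_ne hb with hlt | hgt
        · rw [show ((lam b : L)) = 0 from by rw [hmin b hlt]; rfl, zero_mul]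
        · rw [Statement6Aux.ker_pow_mono _ (show (i0 : ℕ) + 1 ≤ (b : ℕ) from hgt) (hBmem i0),
            mul_zero]
      · intro hni; exact absurd (Finset.mem_univ i0) hni
    rw [hsum] at happ
    rcases mul_eq_zero.mp happ with hz | hz
    · exact hi0 (Submodule.coe_eq_zero.mp hz)
    · have hmm : B i0 ∈ LinearMap.ker ((sbar σ) ^ (i0 : ℕ)) := hz
      rw [← hB (i0 : ℕ) (le_of_lt i0.isLt)] at hmm
      exact B.linearIndependent.notMem_span_image
        (by simp : i0 ∉ {t : Fin (p ^ m) | (t : ℕ) < (i0 : ℕ)}) hmm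
  set Θ : (∀ i : Fin (p ^ m), Ki i) →ₗ[F] Matrix (Fin (p ^ m)) (Fin (p ^ m)) F :=
    ((LinearMap.toMatrix B B).toLinearMap).comp Ψ with hΘdef
  have hΘap : ∀ lam, Θ lam = LinearMap.toMatrix B B (Ψ lam) := fun _ => rfl
  have hΘinj : Function.Injective Θ := by
    rw [hΘdef, LinearMap.coe_comp]
    exact Function.Injective.comp (LinearMap.toMatrix B B).injective hΨinj
  -- the target submodule
  set T' : Submodule F (Matrix (Fin (p ^ m)) (Fin (p ^ m)) F) :=
    { carrier := {A | ∀ i j : Fin (p ^ m), c j ≤ (i : ℕ) → A i j = 0}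
      add_mem' := fun hA hA' i j hij => by
        simp only [Matrix.add_apply, hA i j hij, hA' i j hij, add_zero]
      zero_mem' := fun i j hij => rfl
      smul_mem' := fun r A hA i j hij => by
        simp only [Matrix.smul_apply, hA i j hij, smul_zero] } with hT'
  have hTmem : ∀ A, A ∈ T' ↔ ∀ i j : Fin (p ^ m), c j ≤ (i : ℕ) → A i j = 0 :=
    fun _ => Iff.rfl
  -- dimension of the domain
  have hdimKi : ∀ i : Fin (p ^ m), Module.finrank F (Ki i) = c i := by
    intro i
    have hs : Ki i = Submodule.span F (⇑B '' {t : Fin (p ^ m) | (t : ℕ) < c i}) :=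
      (hB (c i) (hferr.2 i)).symm
    rw [hs]
    haveI : Fintype ↥(⇑B '' {t : Fin (p ^ m) | (t : ℕ) < c i}) :=
      Set.Finite.fintype (Set.toFinite _)
    rw [finrank_span_set_eq_card
      (((linearIndepOn_id_range_iff B.injective).mpr B.linearIndependent).mono (Set.image_subset_range _ _))]
    rw [Set.toFinset_image, Finset.card_image_of_injective _ B.injective]
    rw [Set.toFinset_setOf]
    exact Statement6Aux.card_filter_lt (hferr.2 i)
  have hdim1 : Module.finrank F (∀ i : Fin (p ^ m), Ki i) = ∑ i : Fin (p ^ m), c i := by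
    rw [Module.finrank_pi_fintype]
    exact Finset.sum_congr rfl (fun i _ => hdimKi i)
  -- dimension of the target
  have hT'fr : Module.finrank F T' = ∑ j : Fin (p ^ m), c j := by
    let e1 : T' →ₗ[F] (∀ j : Fin (p ^ m), Fin (c j) → F) :=
      { toFun := fun A j t =>
          (A : Matrix (Fin (p ^ m)) (Fin (p ^ m)) F)
            ⟨(t : ℕ), lt_of_lt_of_le t.isLt (hferr.2 j)⟩ j
        map_add' := fun A A' => by
          funext j t
          simp [Matrix.add_apply]
        map_smul' := fun r A => by
          funext j t
          simp [Matrix.smul_apply] }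
    have hbij : Function.Bijective e1 := by
      constructor
      · intro A A' hAA
        apply Subtype.ext
        ext i j
        by_cases hlt : (i : ℕ) < c j
        · have h1 := congrFun (congrFun hAA j) ⟨(i : ℕ), hlt⟩
          simpa [e1] using h1
        · rw [A.2 i j (by omega), A'.2 i j (by omega)]
      · intro g
        refine ⟨⟨fun i j => if hlt : (i : ℕ) < c j then g j ⟨(i : ℕ), hlt⟩ else 0,
          fun i j hij => dif_neg (by omega)⟩, ?_⟩
        funext j t
        show (if hlt : _ then _ else _) = g j t
        rw [dif_pos (lt_of_lt_of_le t.isLt (le_refl (c j)) : (t : ℕ) < c j)]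
    have he := (LinearEquiv.ofBijective e1 hbij).finrank_eq
    rw [he, Module.finrank_pi_fintype]
    exact Finset.sum_congr rfl (fun j _ => by simp [Module.finrank_pi])
  -- the image is exactly T'
  have hle : LinearMap.range Θ ≤ T' := by
    rintro A ⟨lam, rfl⟩
    rw [hTmem]
    intro i j hij
    rw [hΘap]
    exact fwd (Ψ lam) (fun t => (lam t : L)) (fun t => (lam t).2) (hΨap lam) i j hij
  have hfr1 : Module.finrank F (LinearMap.range Θ) = ∑ i : Fin (p ^ m), c i := by
    rw [LinearMap.finrank_range_of_inj hΘinj, hdim1]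
  have hrange : LinearMap.range Θ = T' :=
    Submodule.eq_of_le_of_finrank_le hle (by rw [hfr1, hT'fr])
  -- conclusion
  ext A
  simp only [Set.mem_image, Set.mem_setOf_eq]
  constructor
  · rintro ⟨f, ⟨lam, hmem, hfx⟩, rfl⟩
    intro i j hij
    exact fwd f lam (fun t => LinearMap.mem_ker.mp (hmem t)) hfx i j hij
  · intro hA
    have hA' : A ∈ LinearMap.range Θ := by
      rw [hrange, hTmem]
      exact hA
    obtain ⟨lam, hlam⟩ := hA'
    exact ⟨Ψ lam, ⟨fun t => (lam t : L), fun t => (lam t).2, hΨap lam⟩, hlam⟩
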